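/- Let f₁, f₂, g₁, g₂ be continuous on [a,b] with f₂(t) ≥ f₁(t) > 0 and g₂(t) ≥ g₁(t) for all t. Let (φ₁, ψ₁) solve φ' = f₁ψ, ψ' = -g₁φ with φ₁ having exactly n ≥ 1 zeros t₁ < ... < t_n in (t₀, t⁰]. Let (φ₂, ψ₂) solve φ' = f₂ψ, ψ' = -g₂φ with ψ₁(t₀)/φ₁(t₀) ≥ ψ₂(t₀)/φ₂(t₀) (interpreted as +∞ when the denominator vanishes). Then φ₂ has at least n zeros in (t₀, t_n]. -/

import Mathlib

open Set Filter
open scoped Topology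


/-- Gronwall-type vanishing lemma (forward). -/
lemma sturm_aux_vanish_fwd {x x' : ℝ → ℝ} {s t K : ℝ} (hst : s ≤ t)
    (hd : ∀ u ∈ Icc s t, HasDerivAt x (x' u) u)
    (hb : ∀ u ∈ Icc s t, |x' u| ≤ K * |x u|)
    (h0 : x s = 0) : x t = 0 := by
  have hcont : ContinuousOn x (Icc s t) := fun u hu => (hd u hu).continuousAt.continuousWithinAt
  have H := norm_le_gronwallBound_of_norm_deriv_right_le (f := x) (f' := x')
    (δ := 0) (K := K) (ε := 0) (a := s) (b := t) hcont
    (fun u hu => (hd u (Ico_subset_Icc_self hu)).hasDerivWithinAt)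
    (by simp [h0])
    (fun u hu => by
      simpa [Real.norm_eq_abs] using hb u (Ico_subset_Icc_self hu))
  have h := H t (right_mem_Icc.2 hst)
  rw [gronwallBound_ε0_δ0] at h
  simpa using norm_le_zero_iff.1 h

/-- Gronwall-type vanishing lemma (two-sided). -/
lemma sturm_aux_vanish {x x' : ℝ → ℝ} {s t K : ℝ}
    (hd : ∀ u ∈ Icc s t, HasDerivAt x (x' u) u)
    (hb : ∀ u ∈ Icc s t, |x' u| ≤ K * |x u|)
    {r : ℝ} (hr : r ∈ Icc s t) (h0 : x r = 0) : ∀ u ∈ Icc s t, x u = 0 := by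
  intro u hu
  rcases le_total r u with h | h
  · exact sturm_aux_vanish_fwd h
      (fun v hv => hd v ⟨hr.1.trans hv.1, hv.2.trans hu.2⟩)
      (fun v hv => hb v ⟨hr.1.trans hv.1, hv.2.trans hu.2⟩) h0
  · have hg : ∀ v : ℝ, HasDerivAt (fun v : ℝ => u + r - v) (-1) v := by
      intro v
      simpa using (hasDerivAt_id v).const_sub (u + r)
    have hmem : ∀ v ∈ Icc u r, u + r - v ∈ Icc s t := by
      intro v hv
      constructor <;> linarith [hv.1, hv.2, hu.1, hr.2]
    have key := sturm_aux_vanish_fwd (x := fun v => x (u + r - v))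
      (x' := fun v => x' (u + r - v) * (-1)) (s := u) (t := r) (K := K) h
      (fun v hv => (hd _ (hmem v hv)).comp v (hg v))
      (fun v hv => by
        simp only [abs_mul, abs_neg, abs_one, mul_one]
        exact hb _ (hmem v hv))
      (by simpa using h0)
    simpa using key


/-- If `θ' = G` with `G > 0` on the level set `{θ = c}`, and `θ s ≥ c`,
then `θ > c` strictly after `s`. -/
lemma sturm_aux_cross {θ G : ℝ → ℝ} {s T c : ℝ}
    (hd : ∀ u ∈ Icc s T, HasDerivAt θ (G u) u)
    (hpos : ∀ u ∈ Icc s T, θ u = c → 0 < G u)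
    (h0 : c ≤ θ s) : ∀ t ∈ Ioc s T, c < θ t := by
  have hcont : ContinuousOn θ (Icc s T) := fun u hu => (hd u hu).continuousAt.continuousWithinAt
  have hge : ∀ t ∈ Icc s T, c ≤ θ t := by
    intro t ht
    by_contra hlt
    push_neg at hlt
    have hst : s ≤ t := ht.1
    set A := Icc s t ∩ {v | c ≤ θ v} with hA
    have hsub : Icc s t ⊆ Icc s T := Icc_subset_Icc le_rfl ht.2
    have hcont' : ContinuousOn θ (Icc s t) := hcont.mono hsub
    have hclosed : IsClosed A := by
      apply ContinuousOn.preimage_isClosed_of_isClosed hcont' isClosed_Icc isClosed_Ici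
    have hAc : IsCompact A := isCompact_Icc.of_isClosed_subset hclosed inter_subset_left
    have hAne : A.Nonempty := ⟨s, ⟨left_mem_Icc.2 hst, h0⟩⟩
    obtain ⟨u, huA, hmax⟩ : ∃ u ∈ A, ∀ v ∈ A, v ≤ u := by
      obtain ⟨u, hu⟩ := hAc.exists_isGreatest hAne
      exact ⟨u, hu.1, hu.2⟩
    have hut : u < t := lt_of_le_of_ne huA.1.2 (by
      rintro rfl; exact absurd huA.2 (not_le.2 hlt))
    -- θ u = c
    have hθu : θ u = c := by
      have h1 : c ∈ Icc (θ t) (θ u) := ⟨hlt.le, huA.2⟩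
      obtain ⟨v, hv, hθv⟩ := intermediate_value_Icc' hut.le (hcont'.mono (Icc_subset_Icc huA.1.1 le_rfl)) h1
      have hvA : v ∈ A := ⟨⟨huA.1.1.trans hv.1, hv.2⟩, hθv.ge⟩
      have : v ≤ u := hmax v hvA
      have : v = u := le_antisymm this hv.1
      rw [← this, hθv]
    have huIcc : u ∈ Icc s T := ⟨huA.1.1, huA.1.2.trans ht.2⟩
    have hGu : 0 < G u := hpos u huIcc hθu
    have hslope := (hasDerivAt_iff_tendsto_slope.1 (hd u huIcc))
    have hslope' : Tendsto (slope θ u) (𝓝[>] u) (𝓝 (G u)) :=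
      hslope.mono_left (nhdsWithin_mono u (fun z hz => ne_of_gt hz))
    have hev1 : ∀ᶠ z in 𝓝[>] u, 0 < slope θ u z :=
      hslope'.eventually_const_lt hGu
    have hev2 : Ioc u t ∈ 𝓝[>] u := Ioc_mem_nhdsGT hut
    obtain ⟨z, hz1, hz2⟩ := (hev1.and (eventually_of_mem hev2 (fun z hz => hz))).exists
    -- slope > 0 and z > u  →  θ z > θ u = c
    have hzu : u < z := hz2.1
    have : 0 < (θ z - θ u) / (z - u) := by rwa [slope_def_field] at hz1
    have hθz : c < θ z := by
      have hpos' : 0 < z - u := by linarith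
      have := (div_pos_iff.1 this)
      rcases this with ⟨h1, _⟩ | ⟨_, h2⟩
      · linarith
      · linarith
    -- but z ∈ (u, t] and every point > u in [s,t] has θ < c?  No: contradiction via sSup
    have hzA : z ∈ A := ⟨⟨huA.1.1.trans hzu.le, hz2.2⟩, hθz.le⟩
    have : z ≤ u := hmax z hzA
    exact absurd this (not_le.2 hzu)
  -- strict part
  intro t ht
  rcases lt_or_eq_of_le (hge t ⟨ht.1.le, ht.2⟩) with h | h
  · exact h
  · exfalso
    have htIcc : t ∈ Icc s T := ⟨ht.1.le, ht.2⟩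
    have hGt : 0 < G t := hpos t htIcc h.symm
    have hslope := (hasDerivAt_iff_tendsto_slope.1 (hd t htIcc))
    have hslope' : Tendsto (slope θ t) (𝓝[<] t) (𝓝 (G t)) :=
      hslope.mono_left (nhdsWithin_mono t (fun z hz => ne_of_lt hz))
    have hev1 : ∀ᶠ z in 𝓝[<] t, 0 < slope θ t z :=
      hslope'.eventually_const_lt hGt
    have hev2 : Ioo s t ∈ 𝓝[<] t := Ioo_mem_nhdsLT ht.1
    obtain ⟨z, hz1, hz2⟩ := (hev1.and (eventually_of_mem hev2 (fun z hz => hz))).exists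
    have : 0 < (θ z - θ t) / (z - t) := by rwa [slope_def_field] at hz1
    have hzc : θ z < θ t := by
      have hneg : z - t < 0 := by linarith [hz2.2]
      rcases div_pos_iff.1 this with ⟨h1, h2⟩ | ⟨h1, h2⟩
      · linarith
      · linarith
    have : c ≤ θ z := hge z ⟨hz2.1.le, hz2.2.le.trans ht.2⟩
    rw [← h] at hzc
    exact absurd hzc (not_lt.2 this)


/-- Comparison of two scalar ODE solutions with a one-sided Lipschitz bound. -/
lemma sturm_aux_compare {θ₁ θ₂ G₁ G₂ : ℝ → ℝ} {s T L : ℝ} (hL : 0 ≤ L)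
    (hd₁ : ∀ u ∈ Icc s T, HasDerivAt θ₁ (G₁ u) u)
    (hd₂ : ∀ u ∈ Icc s T, HasDerivAt θ₂ (G₂ u) u)
    (hbound : ∀ u ∈ Icc s T, θ₂ u ≤ θ₁ u → G₁ u - G₂ u ≤ L * (θ₁ u - θ₂ u))
    (h0 : θ₁ s ≤ θ₂ s) : ∀ t ∈ Icc s T, θ₁ t ≤ θ₂ t := by
  set w : ℝ → ℝ := fun t => θ₁ t - θ₂ t with hw
  set f : ℝ → ℝ := fun t => max (w t) 0 with hf
  set F : ℝ → ℝ := fun t => if θ₂ t < θ₁ t then G₁ t - G₂ t else 0 with hF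
  have hwd : ∀ u ∈ Icc s T, HasDerivAt w (G₁ u - G₂ u) u :=
    fun u hu => (hd₁ u hu).sub (hd₂ u hu)
  have hcontw : ContinuousOn w (Icc s T) :=
    fun u hu => (hwd u hu).continuousAt.continuousWithinAt
  have hcont : ContinuousOn f (Icc s T) := fun u hu =>
    ContinuousAt.continuousWithinAt
      (((hwd u hu).continuousAt).max (continuousAt_const (y := (0:ℝ))) : ContinuousAt f u)
  have key := le_gronwallBound_of_liminf_deriv_right_le (f := f) (f' := F)
    (δ := 0) (K := L) (ε := 0) (a := s) (b := T) hcont ?_ (by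
      simp only [hf, hw]
      exact max_le (by linarith) le_rfl) ?_
  · intro t ht
    have := key t ht
    rw [gronwallBound_ε0_δ0] at this
    have : w t ≤ 0 := le_trans (le_max_left _ _) this
    simpa [hw, sub_nonpos] using this
  · -- liminf condition
    intro x hx r hr
    have hxI : x ∈ Icc s T := Ico_subset_Icc_self hx
    apply Eventually.frequently
    by_cases hc : θ₂ x < θ₁ x
    · -- w x > 0 : f = w locally, with derivative G₁ - G₂
      rw [hF] at hr
      simp only [if_pos hc] at hr
      have hwx : 0 < w x := by simp [hw]; linarith
      have hslope : Tendsto (slope w x) (𝓝[>] x) (𝓝 (G₁ x - G₂ x)) :=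
        (hasDerivAt_iff_tendsto_slope.1 (hwd x hxI)).mono_left
          (nhdsWithin_mono x (fun z hz => ne_of_gt hz))
      have hev1 : ∀ᶠ z in 𝓝[>] x, slope w x z < r := hslope.eventually_lt_const hr
      have hev2 : ∀ᶠ z in 𝓝 x, 0 < w z :=
        (hwd x hxI).continuousAt.eventually_const_lt hwx
      filter_upwards [hev1, eventually_nhdsWithin_of_eventually_nhds hev2,
        self_mem_nhdsWithin] with z h1 h2 h3
      have hzx : x < z := h3
      have hfz : f z = w z := max_eq_left h2.le
      have hfx : f x = w x := max_eq_left hwx.le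
      rw [hfz, hfx]
      rw [slope_def_field] at h1
      calc (z - x)⁻¹ * (w z - w x) = (w z - w x) / (z - x) := by
            rw [div_eq_inv_mul]
        _ < r := h1
    · push_neg at hc
      rw [hF] at hr
      simp only [if_neg (not_lt.2 hc)] at hr
      rcases lt_or_eq_of_le hc with hlt | heq
      · -- w x < 0 : f = 0 locally
        have hev2 : ∀ᶠ z in 𝓝 x, w z < 0 :=
          (hwd x hxI).continuousAt.eventually_lt_const (by simp [hw]; linarith)
        filter_upwards [eventually_nhdsWithin_of_eventually_nhds hev2,
          self_mem_nhdsWithin] with z h2 h3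
        have hfz : f z = 0 := max_eq_right h2.le
        have hfx : f x = 0 := max_eq_right (by simp [hw]; linarith)
        rw [hfz, hfx]
        simpa using hr
      · -- w x = 0
        have hwx : w x = 0 := by simp [hw]; linarith
        have hxx : θ₁ x - θ₂ x = 0 := by simpa [hw] using hwx
        have hder : G₁ x - G₂ x ≤ 0 := by
          have hb2 := hbound x hxI heq.ge
          rw [hxx, mul_zero] at hb2
          exact hb2
        have hslope : Tendsto (slope w x) (𝓝[>] x) (𝓝 (G₁ x - G₂ x)) :=
          (hasDerivAt_iff_tendsto_slope.1 (hwd x hxI)).mono_left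
            (nhdsWithin_mono x (fun z hz => ne_of_gt hz))
        have hev1 : ∀ᶠ z in 𝓝[>] x, slope w x z < r :=
          hslope.eventually_lt_const (lt_of_le_of_lt hder hr)
        filter_upwards [hev1, self_mem_nhdsWithin] with z h1 h3
        have hzx : x < z := h3
        have hfx : f x = 0 := by rw [hf]; simp [hwx]
        rw [hfx]
        rw [slope_def_field, hwx, sub_zero] at h1
        have hinv : 0 < (z - x)⁻¹ := inv_pos.2 (by linarith)
        have : (z - x)⁻¹ * (f z - 0) = max ((z - x)⁻¹ * w z) 0 := by
          rw [hf, sub_zero]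
          exact (mul_max_of_nonneg _ _ hinv.le).trans (by rw [mul_zero])
        rw [this]
        apply max_lt
        · calc (z - x)⁻¹ * w z = w z / (z - x) := by rw [div_eq_inv_mul]
            _ < r := h1
        · exact hr
  · -- bound
    intro x hx
    have hxI : x ∈ Icc s T := Ico_subset_Icc_self hx
    rw [hF]
    by_cases hc : θ₂ x < θ₁ x
    · simp only [if_pos hc]
      have := hbound x hxI hc.le
      have hfx : f x = w x := max_eq_left (by simp [hw]; linarith)
      rw [hfx, add_zero]
      simpa [hw] using this
    · simp only [if_neg hc, add_zero]
      positivity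


lemma sturm_aux_sin_lip (x y : ℝ) : |Real.sin x - Real.sin y| ≤ |x - y| := by
  have h : LipschitzWith 1 Real.sin := by
    apply lipschitzWith_of_nnnorm_deriv_le Real.differentiable_sin
    intro z
    rw [Real.deriv_sin, ← NNReal.coe_le_coe, coe_nnnorm, Real.norm_eq_abs, NNReal.coe_one]
    exact Real.abs_cos_le_one z
  have := h.dist_le_mul x y
  simpa [Real.dist_eq] using this

lemma sturm_aux_angle (p q : ℝ) :
    0 ≤ (if p = 0 then 0 else Real.pi/2 - Real.arctan (q / p)) ∧
    (if p = 0 then 0 else Real.pi/2 - Real.arctan (q / p)) < Real.pi ∧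
    p * Real.cos (if p = 0 then 0 else Real.pi/2 - Real.arctan (q / p))
      - q * Real.sin (if p = 0 then 0 else Real.pi/2 - Real.arctan (q / p)) = 0 := by
  by_cases hp : p = 0
  · simp [hp, Real.pi_pos]
  · simp only [if_neg hp]
    refine ⟨?_, ?_, ?_⟩
    · have := Real.arctan_lt_pi_div_two (q/p); linarith
    · have := Real.neg_pi_div_two_lt_arctan (q/p); linarith
    · rw [Real.cos_pi_div_two_sub, Real.sin_pi_div_two_sub, Real.sin_arctan, Real.cos_arctan]
      have h1 : (0:ℝ) < 1 + (q/p)^2 := by positivity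
      have hs : Real.sqrt (1 + (q/p)^2) ≠ 0 := by positivity
      field_simp
      ring

/-- Prüfer angle for a 2×2 linear system. -/
lemma sturm_aux_system (a b : ℝ) (hab : a ≤ b) (f g : ℝ → ℝ)
    (hf : ContinuousOn f (Icc a b)) (hg : ContinuousOn g (Icc a b))
    (φ ψ : ℝ → ℝ)
    (hφ : ∀ t ∈ Icc a b, HasDerivAt φ (f t * ψ t) t)
    (hψ : ∀ t ∈ Icc a b, HasDerivAt ψ (-(g t * φ t)) t)
    (hfpos : ∀ t ∈ Icc a b, 0 < f t)
    (hnt : ∃ t ∈ Icc a b, φ t ≠ 0 ∨ ψ t ≠ 0)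
    (t₀ : ℝ) (ht₀ : t₀ ∈ Icc a b) (θ₀ : ℝ)
    (hD0 : φ t₀ * Real.cos θ₀ - ψ t₀ * Real.sin θ₀ = 0) :
    ∃ θ G : ℝ → ℝ, Continuous θ ∧ θ t₀ = θ₀ ∧
      (∀ t ∈ Icc a b, HasDerivAt θ (G t) t) ∧
      (∀ t ∈ Icc t₀ b, G t = f t * Real.cos (θ t) ^ 2 + g t * Real.sin (θ t) ^ 2) ∧
      (∀ t ∈ Icc t₀ b, (φ t = 0 ↔ Real.sin (θ t) = 0)) ∧
      (∀ t ∈ Icc t₀ b, Real.sin (θ t) = 0 → 0 < G t) := by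
  have hsub : Icc t₀ b ⊆ Icc a b := Icc_subset_Icc ht₀.1 le_rfl
  have contφ : ContinuousOn φ (Icc a b) :=
    fun t ht => (hφ t ht).continuousAt.continuousWithinAt
  have contψ : ContinuousOn ψ (Icc a b) :=
    fun t ht => (hψ t ht).continuousAt.continuousWithinAt
  set ρ : ℝ → ℝ := fun t => φ t ^ 2 + ψ t ^ 2 with hρdef
  have hρd : ∀ t ∈ Icc a b, HasDerivAt ρ (2 * (f t - g t) * (φ t * ψ t)) t := by
    intro t ht
    have := ((hφ t ht).pow 2).add ((hψ t ht).pow 2)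
    refine this.congr_deriv ?_
    ring
  have hρ0 : ∀ t, 0 ≤ ρ t := fun t => by positivity
  obtain ⟨C, hC⟩ := IsCompact.exists_bound_of_continuousOn isCompact_Icc (hf.sub hg)
  have hC0 : 0 ≤ C := le_trans (norm_nonneg _) (hC a ⟨le_rfl, hab⟩)
  have hρb : ∀ t ∈ Icc a b, |2 * (f t - g t) * (φ t * ψ t)| ≤ C * |ρ t| := by
    intro t ht
    have h2 : |2 * (φ t * ψ t)| ≤ ρ t := by
      simp only [hρdef]
      rw [abs_le]
      constructor
      · nlinarith [sq_nonneg (φ t + ψ t)]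
      · nlinarith [sq_nonneg (φ t - ψ t)]
    have e : 2 * (f t - g t) * (φ t * ψ t) = (f t - g t) * (2 * (φ t * ψ t)) := by ring
    rw [e, abs_mul, abs_of_nonneg (hρ0 t)]
    exact mul_le_mul (by simpa [Real.norm_eq_abs] using hC t ht) h2 (abs_nonneg _) hC0
  have hρpos : ∀ t ∈ Icc a b, 0 < ρ t := by
    intro t ht
    rcases (hρ0 t).lt_or_eq with h | h
    · exact h
    · exfalso
      obtain ⟨r, hr, hnt'⟩ := hnt
      have hall := sturm_aux_vanish (x := ρ) (x' := fun u => 2 * (f u - g u) * (φ u * ψ u))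
        hρd hρb (r := t) ht h.symm r hr
      simp only [hρdef] at hall
      rcases hnt' with h' | h'
      · have : 0 < φ r ^ 2 := by positivity
        nlinarith [sq_nonneg (ψ r)]
      · have : 0 < ψ r ^ 2 := by positivity
        nlinarith [sq_nonneg (φ r)]
  set G : ℝ → ℝ := fun t => (f t * ψ t ^ 2 + g t * φ t ^ 2) / ρ t with hGdef
  have ρcont : ContinuousOn ρ (Icc a b) := (contφ.pow 2).add (contψ.pow 2)
  have hGcont : ContinuousOn G (Icc a b) :=
    ((hf.mul (contψ.pow 2)).add (hg.mul (contφ.pow 2))).div ρcont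
      (fun t ht => (hρpos t ht).ne')
  set Gext : ℝ → ℝ := IccExtend hab (fun p : Icc a b => G p) with hGextdef
  have hGextCont : Continuous Gext := continuous_IccExtend_iff.2 hGcont.restrict
  have hGeq : ∀ t ∈ Icc a b, Gext t = G t := by
    intro t ht
    rw [hGextdef, IccExtend_of_mem hab _ ht]
  set θ : ℝ → ℝ := fun t => θ₀ + ∫ u in t₀..t, Gext u with hθdef
  have hθd : ∀ t : ℝ, HasDerivAt θ (Gext t) t := by
    intro t
    have := intervalIntegral.integral_hasDerivAt_right
      (hGextCont.intervalIntegrable t₀ t)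
      (hGextCont.stronglyMeasurableAtFilter _ _)
      hGextCont.continuousAt
    exact this.const_add θ₀
  have hθcont : Continuous θ := continuous_iff_continuousAt.2 fun t => (hθd t).continuousAt
  have hθt₀ : θ t₀ = θ₀ := by simp [hθdef]
  -- D vanishes on [t₀, b]
  set D : ℝ → ℝ := fun t => φ t * Real.cos (θ t) - ψ t * Real.sin (θ t) with hDdef
  set h : ℝ → ℝ := fun t => (f t - g t) * φ t * ψ t / ρ t with hhdef
  have hDd : ∀ t ∈ Icc a b, HasDerivAt D (h t * D t) t := by
    intro t ht
    have hcos : HasDerivAt (fun u => Real.cos (θ u)) (-Real.sin (θ t) * Gext t) t :=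
      (Real.hasDerivAt_cos (θ t)).comp t (hθd t)
    have hsin : HasDerivAt (fun u => Real.sin (θ u)) (Real.cos (θ t) * Gext t) t :=
      (Real.hasDerivAt_sin (θ t)).comp t (hθd t)
    have hD := ((hφ t ht).mul hcos).sub ((hψ t ht).mul hsin)
    refine hD.congr_deriv ?_
    rw [hGeq t ht, hGdef, hhdef, hDdef]
    have hρ := (hρpos t ht).ne'
    field_simp
    ring
  have hcont_h : ContinuousOn h (Icc a b) :=
    (((hf.sub hg).mul contφ).mul contψ).div ρcont (fun t ht => (hρpos t ht).ne')
  obtain ⟨M, hM⟩ := IsCompact.exists_bound_of_continuousOn isCompact_Icc hcont_h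
  have hDb : ∀ t ∈ Icc a b, |h t * D t| ≤ M * |D t| := by
    intro t ht
    rw [abs_mul]
    exact mul_le_mul_of_nonneg_right (by simpa [Real.norm_eq_abs] using hM t ht) (abs_nonneg _)
  have hD0' : D t₀ = 0 := by rw [hDdef]; simpa [hθt₀] using hD0
  have hDzero : ∀ t ∈ Icc t₀ b, D t = 0 := by
    intro t ht
    exact sturm_aux_vanish_fwd (x := D) (x' := fun u => h u * D u) ht.1
      (fun u hu => hDd u ⟨ht₀.1.trans hu.1, hu.2.trans ht.2⟩)
      (fun u hu => hDb u ⟨ht₀.1.trans hu.1, hu.2.trans ht.2⟩) hD0'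
  -- now extract the conclusions
  refine ⟨θ, Gext, hθcont, hθt₀, fun t _ => hθd t, ?_, ?_, ?_⟩
  · -- G formula
    intro t ht
    have htab := hsub ht
    have hD := hDzero t ht
    simp only [hDdef] at hD
    have hpyth := Real.sin_sq_add_cos_sq (θ t)
    rw [hGeq t htab, hGdef]
    rw [div_eq_iff (hρpos t htab).ne', hρdef]
    linear_combination ((g t - f t) * (φ t * Real.cos (θ t) + ψ t * Real.sin (θ t))) * hD
      - (f t * ψ t ^ 2 + g t * φ t ^ 2) * hpyth
  · -- zero equivalence
    intro t ht
    have htab := hsub ht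
    have hD := hDzero t ht
    simp only [hDdef] at hD
    have hpyth := Real.sin_sq_add_cos_sq (θ t)
    have hφeq : φ t = Real.sin (θ t) * (φ t * Real.sin (θ t) + ψ t * Real.cos (θ t)) := by
      linear_combination (Real.cos (θ t)) * hD - φ t * hpyth
    have hE2 : (φ t * Real.sin (θ t) + ψ t * Real.cos (θ t)) ^ 2 = ρ t := by
      simp only [hρdef]
      linear_combination (-(φ t * Real.cos (θ t) - ψ t * Real.sin (θ t))) * hD
        + (φ t ^ 2 + ψ t ^ 2) * hpyth
    have hEne : φ t * Real.sin (θ t) + ψ t * Real.cos (θ t) ≠ 0 := by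
      intro hE
      rw [hE] at hE2
      have := hρpos t htab
      simp at hE2
      linarith [hE2 ▸ this]
    constructor
    · intro hφ0
      have h2 : Real.sin (θ t) * (φ t * Real.sin (θ t) + ψ t * Real.cos (θ t)) = 0 := by
        rw [← hφeq]; exact hφ0
      exact (mul_eq_zero.1 h2).resolve_right hEne
    · intro hs
      rw [hφeq, hs, zero_mul]
  · -- positivity
    intro t ht hs
    have htab := hsub ht
    have hD := hDzero t ht
    simp only [hDdef] at hD
    have hpyth := Real.sin_sq_add_cos_sq (θ t)
    have hGf : Gext t = f t * Real.cos (θ t) ^ 2 + g t * Real.sin (θ t) ^ 2 := by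
      rw [hGeq t htab, hGdef]
      rw [div_eq_iff (hρpos t htab).ne', hρdef]
      linear_combination ((g t - f t) * (φ t * Real.cos (θ t) + ψ t * Real.sin (θ t))) * hD
        - (f t * ψ t ^ 2 + g t * φ t ^ 2) * hpyth
    rw [hGf, hs]
    have hc2 : Real.cos (θ t) ^ 2 = 1 := by rw [hs] at hpyth; linarith
    rw [hc2]
    simpa using hfpos t htab


set_option maxHeartbeats 1000000 in
/-- Theorem 1.2 (first part): Sturm comparison for two linear systems.  If
`f₂ ≥ f₁ > 0`, `g₂ ≥ g₁`, the first component `φ₁` of a solution of system 1 has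
exactly `n ≥ 1` zeros `t₁ < … < t_n` in `(t₀,tE]`, and
`ψ₁(t₀)/φ₁(t₀) ≥ ψ₂(t₀)/φ₂(t₀)` (with the `+∞` convention at vanishing denominators),
then `φ₂` has at least `n` zeros in `(t₀, t_n]`. -/
theorem sturm_comparison_systems
    (a b : ℝ) (hab : a < b) (f₁ g₁ f₂ g₂ : ℝ → ℝ)
    (hf₁ : ContinuousOn f₁ (Icc a b)) (hg₁ : ContinuousOn g₁ (Icc a b))
    (hf₂ : ContinuousOn f₂ (Icc a b)) (hg₂ : ContinuousOn g₂ (Icc a b))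
    (hmaj : ∀ t ∈ Icc a b, f₂ t ≥ f₁ t ∧ f₁ t > 0 ∧ g₂ t ≥ g₁ t)
    (t₀ tE : ℝ) (ht₀ : t₀ ∈ Icc a b) (htE : tE ∈ Icc a b) (h₀ : t₀ < tE)
    (φ₁ ψ₁ φ₂ ψ₂ : ℝ → ℝ)
    (hφ₁ : ∀ t ∈ Icc a b, HasDerivAt φ₁ (f₁ t * ψ₁ t) t)
    (hψ₁ : ∀ t ∈ Icc a b, HasDerivAt ψ₁ (-(g₁ t * φ₁ t)) t)
    (hφ₂ : ∀ t ∈ Icc a b, HasDerivAt φ₂ (f₂ t * ψ₂ t) t)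
    (hψ₂ : ∀ t ∈ Icc a b, HasDerivAt ψ₂ (-(g₂ t * φ₂ t)) t)
    (hnt₁ : ∃ t ∈ Icc a b, φ₁ t ≠ 0 ∨ ψ₁ t ≠ 0)
    (hnt₂ : ∃ t ∈ Icc a b, φ₂ t ≠ 0 ∨ ψ₂ t ≠ 0)
    (n : ℕ) (hn : 1 ≤ n) (zs : Fin n → ℝ) (hmono : StrictMono zs)
    (hzs : ∀ i, zs i ∈ Ioc t₀ tE ∧ φ₁ (zs i) = 0)
    (hexact : ∀ s ∈ Ioc t₀ tE, φ₁ s = 0 → ∃ i, s = zs i)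
    -- `ψ₁(t₀)/φ₁(t₀) ≥ ψ₂(t₀)/φ₂(t₀)`, the ratio read as `+∞` when the denominator is `0`
    (hratio : φ₁ t₀ = 0 ∨
      (φ₁ t₀ ≠ 0 ∧ φ₂ t₀ ≠ 0 ∧ ψ₁ t₀ / φ₁ t₀ ≥ ψ₂ t₀ / φ₂ t₀)) :
    ∃ s : Fin n → ℝ, StrictMono s ∧
      ∀ i, s i ∈ Ioc t₀ (zs ⟨n - 1, by omega⟩) ∧ φ₂ (s i) = 0 := by
  have hab' : a ≤ b := hab.le
  have hπ := Real.pi_pos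
  have hf1pos : ∀ t ∈ Icc a b, 0 < f₁ t := fun t ht => (hmaj t ht).2.1
  have hf2pos : ∀ t ∈ Icc a b, 0 < f₂ t :=
    fun t ht => lt_of_lt_of_le (hmaj t ht).2.1 (hmaj t ht).1
  -- initial angles
  set α₁ : ℝ := if φ₁ t₀ = 0 then 0 else Real.pi/2 - Real.arctan (ψ₁ t₀ / φ₁ t₀) with hα₁def
  set α₂ : ℝ := if φ₂ t₀ = 0 then 0 else Real.pi/2 - Real.arctan (ψ₂ t₀ / φ₂ t₀) with hα₂def
  obtain ⟨hα₁0, hα₁π, hD0₁⟩ := sturm_aux_angle (φ₁ t₀) (ψ₁ t₀)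
  obtain ⟨hα₂0, hα₂π, hD0₂⟩ := sturm_aux_angle (φ₂ t₀) (ψ₂ t₀)
  rw [← hα₁def] at hα₁0 hα₁π hD0₁
  rw [← hα₂def] at hα₂0 hα₂π hD0₂
  have hα_le : α₁ ≤ α₂ := by
    rcases hratio with h | ⟨h1, h2, h3⟩
    · rw [hα₁def, if_pos h]; exact hα₂0
    · rw [hα₁def, if_neg h1, hα₂def, if_neg h2]
      have := Real.arctan_strictMono.monotone h3
      linarith
  -- Prüfer angles
  obtain ⟨θ₁, Gc₁, hθ₁cont, hθ₁t₀, hθ₁d, hG₁form, hzero₁, hpos₁⟩ :=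
    sturm_aux_system a b hab' f₁ g₁ hf₁ hg₁ φ₁ ψ₁ hφ₁ hψ₁ hf1pos hnt₁ t₀ ht₀ α₁ hD0₁
  obtain ⟨θ₂, Gc₂, hθ₂cont, hθ₂t₀, hθ₂d, hG₂form, hzero₂, hpos₂⟩ :=
    sturm_aux_system a b hab' f₂ g₂ hf₂ hg₂ φ₂ ψ₂ hφ₂ hψ₂ hf2pos hnt₂ t₀ ht₀ α₂ hD0₂
  -- the last zero
  have hn1 : n - 1 < n := by omega
  set T : ℝ := zs ⟨n - 1, hn1⟩ with hTdef
  have hTmem : T ∈ Ioc t₀ tE := (hzs _).1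
  have hTb : T ≤ b := hTmem.2.trans htE.2
  have ht₀T : t₀ ≤ T := hTmem.1.le
  have hsub1 : Icc t₀ T ⊆ Icc a b := fun u hu => ⟨ht₀.1.trans hu.1, hu.2.trans hTb⟩
  have hsub2 : Icc t₀ T ⊆ Icc t₀ b := fun u hu => ⟨hu.1, hu.2.trans hTb⟩
  have hzsT : ∀ i, zs i ≤ T := by
    intro i
    rcases eq_or_lt_of_le (show i.1 ≤ n - 1 by omega) with h | h
    · rw [hTdef]
      exact le_of_eq (congrArg zs (Fin.ext h))
    · exact (hmono (show i < ⟨n-1, hn1⟩ from h)).le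
  have hzsIcc : ∀ i, zs i ∈ Icc t₀ b := fun i => ⟨(hzs i).1.1.le, (hzs i).1.2.trans htE.2⟩
  -- comparison of the two angles
  obtain ⟨C₁, hC₁⟩ := IsCompact.exists_bound_of_continuousOn isCompact_Icc (hg₁.sub hf₁)
  have hC₁0 : 0 ≤ C₁ := le_trans (norm_nonneg _) (hC₁ a ⟨le_rfl, hab'⟩)
  have hcmp : ∀ t ∈ Icc t₀ T, θ₁ t ≤ θ₂ t := by
    apply sturm_aux_compare (L := 2 * C₁) (by linarith)
      (fun u hu => hθ₁d u (hsub1 hu)) (fun u hu => hθ₂d u (hsub1 hu))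
    · intro u hu hle
      have hu_ab := hsub1 hu
      have hu_t0b := hsub2 hu
      rw [hG₁form u hu_t0b, hG₂form u hu_t0b]
      have hp1 := Real.sin_sq_add_cos_sq (θ₁ u)
      have hp2 := Real.sin_sq_add_cos_sq (θ₂ u)
      have e : f₁ u * Real.cos (θ₁ u) ^ 2 + g₁ u * Real.sin (θ₁ u) ^ 2
          - (f₂ u * Real.cos (θ₂ u) ^ 2 + g₂ u * Real.sin (θ₂ u) ^ 2)
          = (g₁ u - f₁ u) * (Real.sin (θ₁ u) ^ 2 - Real.sin (θ₂ u) ^ 2)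
            + ((f₁ u - f₂ u) * Real.cos (θ₂ u) ^ 2 + (g₁ u - g₂ u) * Real.sin (θ₂ u) ^ 2) := by
        linear_combination f₁ u * hp1 - f₁ u * hp2
      have h2 : (f₁ u - f₂ u) * Real.cos (θ₂ u) ^ 2 + (g₁ u - g₂ u) * Real.sin (θ₂ u) ^ 2 ≤ 0 := by
        have hm := hmaj u hu_ab
        nlinarith [sq_nonneg (Real.cos (θ₂ u)), sq_nonneg (Real.sin (θ₂ u))]
      have h3 : (g₁ u - f₁ u) * (Real.sin (θ₁ u) ^ 2 - Real.sin (θ₂ u) ^ 2)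
          ≤ 2 * C₁ * (θ₁ u - θ₂ u) := by
        have habs1 : |Real.sin (θ₁ u) - Real.sin (θ₂ u)| ≤ |θ₁ u - θ₂ u| :=
          sturm_aux_sin_lip _ _
        have habs2 : |Real.sin (θ₁ u) + Real.sin (θ₂ u)| ≤ 2 := by
          rw [abs_le]
          constructor
          · linarith [Real.neg_one_le_sin (θ₁ u), Real.neg_one_le_sin (θ₂ u)]
          · linarith [Real.sin_le_one (θ₁ u), Real.sin_le_one (θ₂ u)]
        have key : |(g₁ u - f₁ u) * (Real.sin (θ₁ u) ^ 2 - Real.sin (θ₂ u) ^ 2)|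
            ≤ C₁ * (|θ₁ u - θ₂ u| * 2) := by
          rw [abs_mul]
          have hfac : Real.sin (θ₁ u) ^ 2 - Real.sin (θ₂ u) ^ 2
              = (Real.sin (θ₁ u) - Real.sin (θ₂ u)) * (Real.sin (θ₁ u) + Real.sin (θ₂ u)) := by
            ring
          rw [hfac, abs_mul]
          apply mul_le_mul (by simpa [Real.norm_eq_abs] using hC₁ u hu_ab)
            (mul_le_mul habs1 habs2 (abs_nonneg _) (abs_nonneg _))
            (by positivity) hC₁0
        have habs3 : |θ₁ u - θ₂ u| = θ₁ u - θ₂ u := abs_of_nonneg (by linarith)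
        rw [habs3] at key
        have := le_trans (le_abs_self _) key
        linarith
      linarith
    · rw [hθ₁t₀, hθ₂t₀]; exact hα_le
  -- counting zeros for θ₁
  have count : ∀ m, ∀ hm : m < n, ((m : ℝ) + 1) * Real.pi ≤ θ₁ (zs ⟨m, hm⟩) := by
    intro m
    induction m with
    | zero =>
      intro hm
      have hcross := sturm_aux_cross (θ := θ₁) (G := Gc₁) (s := t₀) (T := T) (c := 0)
        (fun u hu => hθ₁d u (hsub1 hu))
        (fun u hu hθu => hpos₁ u (hsub2 hu) (by rw [hθu]; exact Real.sin_zero))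
        (by rw [hθ₁t₀]; exact hα₁0)
      have hz0T : zs ⟨0, hm⟩ ∈ Ioc t₀ T := ⟨(hzs _).1.1, hzsT _⟩
      have h1 : 0 < θ₁ (zs ⟨0, hm⟩) := hcross _ hz0T
      have hsin : Real.sin (θ₁ (zs ⟨0, hm⟩)) = 0 :=
        (hzero₁ _ (hzsIcc _)).1 (hzs _).2
      obtain ⟨k, hk⟩ := Real.sin_eq_zero_iff.1 hsin
      have hkpos : (0:ℤ) < k := by
        by_contra hkk
        push_neg at hkk
        have hkr : (k:ℝ) ≤ 0 := by exact_mod_cast hkk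
        have : (k:ℝ) * Real.pi ≤ 0 := mul_nonpos_iff.2 (Or.inr ⟨hkr, hπ.le⟩)
        linarith [hk ▸ this]
      have hk1 : (1:ℝ) ≤ (k:ℝ) := by exact_mod_cast hkpos
      rw [← hk]
      push_cast
      have := mul_le_mul_of_nonneg_right hk1 hπ.le
      linarith
    | succ m ih =>
      intro hm
      have hm' : m < n := by omega
      have prev := ih hm'
      have hsinm : Real.sin (θ₁ (zs ⟨m, hm'⟩)) = 0 :=
        (hzero₁ _ (hzsIcc _)).1 (hzs _).2
      obtain ⟨k, hk⟩ := Real.sin_eq_zero_iff.1 hsinm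
      have hzmT : zs ⟨m, hm'⟩ ≤ T := hzsT _
      have hsubm : Icc (zs ⟨m, hm'⟩) T ⊆ Icc a b :=
        fun u hu => ⟨ht₀.1.trans ((hzs ⟨m, hm'⟩).1.1.le.trans hu.1), hu.2.trans hTb⟩
      have hsubm2 : Icc (zs ⟨m, hm'⟩) T ⊆ Icc t₀ b :=
        fun u hu => ⟨(hzs ⟨m, hm'⟩).1.1.le.trans hu.1, hu.2.trans hTb⟩
      have hcross := sturm_aux_cross (θ := θ₁) (G := Gc₁) (s := zs ⟨m, hm'⟩) (T := T)
        (c := (k:ℝ) * Real.pi)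
        (fun u hu => hθ₁d u (hsubm hu))
        (fun u hu hθu => hpos₁ u (hsubm2 hu) (by rw [hθu]; exact Real.sin_int_mul_pi k))
        (le_of_eq hk)
      have hnext : zs ⟨m+1, hm⟩ ∈ Ioc (zs ⟨m, hm'⟩) T :=
        ⟨hmono (Fin.mk_lt_mk.2 (lt_add_one m)), hzsT _⟩
      have h1 : (k:ℝ) * Real.pi < θ₁ (zs ⟨m+1, hm⟩) := hcross _ hnext
      have hsinm1 : Real.sin (θ₁ (zs ⟨m+1, hm⟩)) = 0 :=
        (hzero₁ _ (hzsIcc _)).1 (hzs _).2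
      obtain ⟨k', hk'⟩ := Real.sin_eq_zero_iff.1 hsinm1
      have hkk' : (k:ℝ) < (k':ℝ) := by
        rw [← hk'] at h1
        exact (mul_lt_mul_iff_left₀ hπ).1 h1
      have hk'z : k + 1 ≤ k' := by
        have : k < k' := by exact_mod_cast hkk'
        omega
      have hk'r : (k:ℝ) + 1 ≤ (k':ℝ) := by exact_mod_cast hk'z
      have hkm : ((m:ℝ) + 1) ≤ (k:ℝ) := by
        rw [← hk] at prev
        have hinv := (mul_le_mul_iff_left₀ hπ).1 prev
        exact hinv
      rw [← hk']
      push_cast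
      have h5 : ((m:ℝ) + 1 + 1) ≤ (k':ℝ) := by linarith
      have := mul_le_mul_of_nonneg_right h5 hπ.le
      linarith
  -- θ₂ at T
  have hθ₂T : (n:ℝ) * Real.pi ≤ θ₂ T := by
    have hcnt := count (n-1) hn1
    have hcmpT := hcmp T (right_mem_Icc.2 ht₀T)
    have hcast : ((n-1 : ℕ) : ℝ) + 1 = (n:ℝ) := by
      have : ((n-1 : ℕ) : ℝ) = (n:ℝ) - 1 := by
        push_cast [Nat.cast_sub hn]
        ring
      rw [this]; ring
    rw [hcast] at hcnt
    calc (n:ℝ) * Real.pi ≤ θ₁ T := hcnt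
      _ ≤ θ₂ T := hcmpT
  have hθ₂t₀lt : θ₂ t₀ < Real.pi := by rw [hθ₂t₀]; exact hα₂π
  -- extract zeros of φ₂
  have exzero : ∀ i : Fin n, ∃ u ∈ Ioc t₀ T, θ₂ u = ((i:ℕ) + 1 : ℝ) * Real.pi := by
    intro i
    set c : ℝ := ((i:ℕ) + 1 : ℝ) * Real.pi with hcdef
    have hπc : Real.pi ≤ c := by
      rw [hcdef]
      nlinarith [Nat.cast_nonneg (α := ℝ) (i:ℕ)]
    have hc1 : θ₂ t₀ ≤ c := by linarith
    have hc2 : c ≤ θ₂ T := by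
      have h1 : c ≤ (n:ℝ) * Real.pi := by
        rw [hcdef]
        have : ((i:ℕ) : ℝ) + 1 ≤ (n:ℝ) := by exact_mod_cast i.isLt
        nlinarith
      linarith
    obtain ⟨u, hu, hθu⟩ := intermediate_value_Icc ht₀T hθ₂cont.continuousOn ⟨hc1, hc2⟩
    refine ⟨u, ⟨?_, hu.2⟩, hθu⟩
    rcases eq_or_lt_of_le hu.1 with h | h
    · exfalso
      rw [← h] at hθu
      rw [hθu] at hθ₂t₀lt
      linarith
    · exact h
  choose sfun hsfun1 hsfun2 using exzero
  have hsinc : ∀ i : Fin n, Real.sin (((i:ℕ) + 1 : ℝ) * Real.pi) = 0 := by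
    intro i
    have : ((i:ℕ) + 1 : ℝ) = ((i:ℕ) + 1 : ℕ) := by push_cast; ring
    rw [this]
    exact Real.sin_nat_mul_pi _
  -- strict monotonicity
  have hsmono : StrictMono sfun := by
    intro i j hij
    by_contra hle
    push_neg at hle
    have hsubj : Icc (sfun j) T ⊆ Icc a b :=
      fun u hu => ⟨ht₀.1.trans ((hsfun1 j).1.le.trans hu.1), hu.2.trans hTb⟩
    have hsubj2 : Icc (sfun j) T ⊆ Icc t₀ b :=
      fun u hu => ⟨(hsfun1 j).1.le.trans hu.1, hu.2.trans hTb⟩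
    have hcross := sturm_aux_cross (θ := θ₂) (G := Gc₂) (s := sfun j) (T := T)
      (c := ((j:ℕ) + 1 : ℝ) * Real.pi)
      (fun u hu => hθ₂d u (hsubj hu))
      (fun u hu hθu => hpos₂ u (hsubj2 hu) (by rw [hθu]; exact hsinc j))
      (le_of_eq (hsfun2 j).symm)
    have hijn : (i:ℕ) < (j:ℕ) := hij
    rcases eq_or_lt_of_le hle with h | h
    · -- sfun i = sfun j
      have e1 : θ₂ (sfun i) = ((i:ℕ) + 1 : ℝ) * Real.pi := hsfun2 i
      have e2 : θ₂ (sfun i) = ((j:ℕ) + 1 : ℝ) * Real.pi := by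
        rw [← h]; exact hsfun2 j
      have e3 : ((i:ℕ) : ℝ) + 1 = ((j:ℕ) : ℝ) + 1 :=
        mul_right_cancel₀ hπ.ne' (e1.symm.trans e2)
      have e4 : (i:ℕ) + 1 = (j:ℕ) + 1 := by exact_mod_cast e3
      omega
    · -- sfun j < sfun i ≤ T
      have hmem : sfun i ∈ Ioc (sfun j) T := ⟨h, (hsfun1 i).2⟩
      have h1 := hcross _ hmem
      rw [hsfun2 i] at h1
      have h2 : ((j:ℕ) : ℝ) + 1 < ((i:ℕ) : ℝ) + 1 := (mul_lt_mul_iff_left₀ hπ).1 h1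
      have h3 : ((j:ℕ) : ℝ) < ((i:ℕ) : ℝ) := by linarith
      have h4 : (j:ℕ) < (i:ℕ) := by exact_mod_cast h3
      omega
  refine ⟨sfun, hsmono, ?_⟩
  intro i
  refine ⟨hsfun1 i, ?_⟩
  have := (hzero₂ (sfun i) ⟨(hsfun1 i).1.le, (hsfun1 i).2.trans hTb⟩).2
  apply this
  rw [hsfun2 i]
  exact hsinc i
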